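/- Let Π be a HEF CNF theory and O ⊆ atom(Π^{nd}) a set of atoms that is elementary for Π^{nd} and non-outbound in atom(Π^{nd}) for Π^{nd} (i.e., super-elementary for Π^{nd}). Then O is elementary for Π and non-outbound in atom(Π) for Π (i.e., super-elementary for Π). -/
import Mathlib


structure Clause where
  head : Finset ℕ
  body : Finset ℕ
deriving DecidableEq

abbrev Theory := Finset Clause

/-- interpretation I satisfies clause c -/
def satC (I : Finset ℕ) (c : Clause) : Prop :=
  (c.head ∩ I).Nonempty ∨ ¬ c.body ⊆ I

def isModel (T : Theory) (I : Finset ℕ) : Prop := ∀ c ∈ T, satC I c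

def isMinModel (T : Theory) (I : Finset ℕ) : Prop :=
  isModel T I ∧ ∀ J ⊂ I, ¬ isModel T J

def Positive (T : Theory) : Prop := ∀ c ∈ T, c.head.Nonempty

def Horn (T : Theory) : Prop := ∀ c ∈ T, c.head.card = 1

/-- atoms occurring in a theory -/
def atoms (T : Theory) : Finset ℕ := T.biUnion (fun c => c.head ∪ c.body)

/-- c_{X←} : project head on X -/
def projHeadC (c : Clause) (X : Finset ℕ) : Clause := ⟨c.head ∩ X, c.body⟩
/-- c_X : project head and body on X -/
def projC (c : Clause) (X : Finset ℕ) : Clause := ⟨c.head ∩ X, c.body ∩ X⟩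

/-- Π_{X←} -/
def projHeadT (T : Theory) (X : Finset ℕ) : Theory :=
  (T.image (fun c => projHeadC c X)).filter (fun c => c.head.Nonempty)

/-- Π_X -/
def projT (T : Theory) (X : Finset ℕ) : Theory :=
  (T.image (fun c => projC c X)).filter (fun c => c.head.Nonempty)

/-- Π^{nd} : single-head fragment -/
def nd (T : Theory) : Theory := T.filter (fun c => c.head.card = 1)

/-- the steady set of M for Π is the minimal model of Π^{nd}_{M←} -/
def isSteady (T : Theory) (M S : Finset ℕ) : Prop :=
  isMinModel (nd (projHeadT T M)) S

def simpl (T : Theory) (M S : Finset ℕ) : Theory :=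
  T.filter (fun c => c.head ∩ S = ∅ ∧ c.body ⊆ M)

/-- simplified theory of Π w.r.t. M (with steady set S) -/
def simplT (T : Theory) (M S : Finset ℕ) : Theory := projT (simpl T M S) (M \ S)

/-- E erasable in M for T -/
def Erasable (T : Theory) (M E : Finset ℕ) : Prop :=
  E.Nonempty ∧ E ⊆ M ∧ isModel T (M \ E)

def Outbound (T : Theory) (Y Z : Finset ℕ) : Prop :=
  ∃ c ∈ T, (c.head ∩ Z).Nonempty ∧ (c.body ∩ (Y \ Z)).Nonempty ∧
    c.body ∩ Z = ∅ ∧ c.head ∩ (Y \ Z) = ∅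

def Elementary (T : Theory) (Y : Finset ℕ) : Prop :=
  Y.Nonempty ∧ Y ⊆ atoms T ∧ ∀ Z, Z ⊂ Y → Z.Nonempty → Outbound T Y Z

def HEF (T : Theory) : Prop :=
  ∀ c ∈ T, ∀ E, Elementary T E → (E ∩ c.head).card ≤ 1

def DisjunctiveSet (T : Theory) (S : Finset ℕ) : Prop :=
  ∃ c ∈ T, 1 < (c.head ∩ S).card

def SuperElementary (T : Theory) (X : Finset ℕ) : Prop :=
  Elementary T X ∧ ¬ Outbound T (atoms T) X

def posForm (T : Theory) (phi : ℕ) : Theory :=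
  T.filter (fun c => c.head.Nonempty) ∪
  (T.filter (fun c => c.head = ∅)).image (fun c => ⟨{phi}, c.body⟩) ∪
  (atoms T).image (fun a => ⟨{a}, {phi}⟩)

theorem stmt9 (T : Theory) (O : Finset ℕ) (hHEF : HEF T)
    (hsub : O ⊆ atoms (nd T)) (hse : SuperElementary (nd T) O) :
    SuperElementary T O := by
  obtain ⟨⟨hne, hsubA, hout⟩, hnout⟩ := hse
  have hndsub : nd T ⊆ T := Finset.filter_subset _ _
  have hatoms : atoms (nd T) ⊆ atoms T := by
    intro a ha
    simp only [atoms, Finset.mem_biUnion] at ha ⊢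
    obtain ⟨c, hc, h⟩ := ha
    exact ⟨c, hndsub hc, h⟩
  have hElemT : Elementary T O := by
    refine ⟨hne, hsubA.trans hatoms, fun Z hZ hZne => ?_⟩
    obtain ⟨c, hc, h1, h2, h3, h4⟩ := hout Z hZ hZne
    exact ⟨c, hndsub hc, h1, h2, h3, h4⟩
  refine ⟨hElemT, ?_⟩
  rintro ⟨c, hcT, h1, h2, h3, h4⟩
  have hHsub : c.head ⊆ O := by
    intro a ha
    by_contra h
    have haT : a ∈ atoms T := by
      simp only [atoms, Finset.mem_biUnion]
      exact ⟨c, hcT, Finset.mem_union_left _ ha⟩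
    have hmem : a ∈ c.head ∩ (atoms T \ O) := by
      simp [ha, haT, h]
    rw [h4] at hmem
    exact absurd hmem (Finset.notMem_empty a)
  have hcard : (O ∩ c.head).card ≤ 1 := hHEF c hcT O hElemT
  rw [Finset.inter_eq_right.mpr hHsub] at hcard
  have hnonempty : c.head.Nonempty := by
    obtain ⟨a, ha⟩ := h1
    exact ⟨a, (Finset.mem_inter.mp ha).1⟩
  have hcard1 : c.head.card = 1 :=
    le_antisymm hcard (Finset.one_le_card.mpr hnonempty)
  have hcnd : c ∈ nd T := Finset.mem_filter.mpr ⟨hcT, hcard1⟩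
  apply hnout
  refine ⟨c, hcnd, h1, ?_, h3, ?_⟩
  · obtain ⟨b, hb⟩ := h2
    rw [Finset.mem_inter, Finset.mem_sdiff] at hb
    refine ⟨b, ?_⟩
    rw [Finset.mem_inter, Finset.mem_sdiff]
    refine ⟨hb.1, ?_, hb.2.2⟩
    simp only [atoms, Finset.mem_biUnion]
    exact ⟨c, hcnd, Finset.mem_union_right _ hb.1⟩
  · apply Finset.eq_empty_of_forall_notMem
    intro a ha
    rw [Finset.mem_inter, Finset.mem_sdiff] at ha
    exact ha.2.2 (hHsub ha.1)
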